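/- Let A ∈ ℝ^{n×n}, B ∈ ℝ^{n×m}, γ ∈ (0,1]. Let E*, E† ∈ ℝ^{m×m} be symmetric positive definite with ‖E*^{-1}‖ < 1, and let P*, P† ∈ ℝ^{n×n} be symmetric positive semi-definite. Define K* = −γ·(E* + γ·Bᵀ·P*·B)^{-1}·Bᵀ·P*·A and K† = −γ·(E† + γ·Bᵀ·P†·B)^{-1}·Bᵀ·P†·A. Suppose ‖E† − E*‖ ≤ ε and ‖P† − P*‖ ≤ f(ε) for some function f : ℝ₊ → ℝ₊, and suppose ε ≤ λ_min(E*)/2. Then ‖K† − K*‖ ≤ Γ₃·f(ε) + Γ₄·ε, where Γ₃ = (2γ/λ_min(E*))·max{‖A‖, ‖B‖}²·(‖K*‖ + 1) and Γ₄ = (2/λ_min(E*))·‖K*‖. -/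

import Mathlib

open Matrix
open scoped Matrix.Norms.L2Operator

/-- The spectral norm (operator 2-norm) of a real matrix. -/
noncomputable def specNorm {m n : ℕ} (M : Matrix (Fin m) (Fin n) ℝ) : ℝ :=
  ‖LinearMap.toContinuousLinearMap (Matrix.toEuclideanLin M)‖

/-- The smallest eigenvalue of a real symmetric matrix (infimum of its real spectrum). -/
noncomputable def lamMin {n : ℕ} (M : Matrix (Fin n) (Fin n) ℝ) : ℝ :=
  sInf (spectrum ℝ M)

lemma specNorm_eq_norm {m n : ℕ} (M : Matrix (Fin m) (Fin n) ℝ) : specNorm M = ‖M‖ := rfl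

lemma norm_transpose_aux {m n : ℕ} (B : Matrix (Fin m) (Fin n) ℝ) : ‖Bᵀ‖ = ‖B‖ := by
  rw [← conjTranspose_eq_transpose_of_trivial]
  exact Matrix.l2_opNorm_conjTranspose B

lemma posSemidef_smul_aux {k : ℕ} {M : Matrix (Fin k) (Fin k) ℝ} (hM : M.PosSemidef) {c : ℝ}
    (hc : 0 ≤ c) : (c • M).PosSemidef := by
  refine Matrix.PosSemidef.of_dotProduct_mulVec_nonneg ?_ (fun x => ?_)
  · unfold Matrix.IsHermitian
    rw [conjTranspose_smul, hM.1.eq]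
    simp
  · rw [smul_mulVec, dotProduct_smul]
    exact mul_nonneg hc (hM.dotProduct_mulVec_nonneg x)

lemma rayleigh_aux {k : ℕ} {M : Matrix (Fin k) (Fin k) ℝ} (hH : M.IsHermitian) {c : ℝ}
    (hc : ∀ i, c ≤ hH.eigenvalues i) (x : EuclideanSpace ℝ (Fin k)) :
    c * ‖x‖ ^ 2 ≤ inner ℝ x (Matrix.toEuclideanLin M x) := by
  set b := hH.eigenvectorBasis with hb
  set T := Matrix.toEuclideanLin M with hT
  have hsym : LinearMap.IsSymmetric T := (Matrix.isHermitian_iff_isSymmetric.1 hH)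
  have hTb : ∀ i, T (b i) = hH.eigenvalues i • b i := by
    intro i
    apply PiLp.ext
    intro j
    have := congrFun (hH.mulVec_eigenvectorBasis i) j
    simpa [hT, Matrix.toEuclideanLin_apply] using this
  have key : (inner ℝ x (T x) : ℝ) = ∑ i, hH.eigenvalues i * (inner ℝ (b i) x) ^ 2 := by
    rw [← b.sum_inner_mul_inner x (T x)]
    congr 1
    ext i
    have : (inner ℝ (b i) (T x) : ℝ) = inner ℝ (T (b i)) x := (hsym (b i) x).symm
    rw [this, hTb i, inner_smul_left]
    have hx : (inner ℝ x (b i) : ℝ) = inner ℝ (b i) x := real_inner_comm _ _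
    rw [hx]
    simp [starRingEnd_apply]
    ring
  have key2 : ‖x‖ ^ 2 = ∑ i, (inner ℝ (b i) x : ℝ) ^ 2 := by
    rw [← real_inner_self_eq_norm_sq, ← b.sum_inner_mul_inner x x]
    congr 1
    ext i
    rw [real_inner_comm x (b i), sq]
  rw [key, key2, Finset.mul_sum]
  apply Finset.sum_le_sum
  intro i _
  exact mul_le_mul_of_nonneg_right (hc i) (sq_nonneg _)

lemma psd_inner_aux {k : ℕ} {N : Matrix (Fin k) (Fin k) ℝ} (hN : N.PosSemidef)
    (x : EuclideanSpace ℝ (Fin k)) : 0 ≤ (inner ℝ x (Matrix.toEuclideanLin N x) : ℝ) := by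
  have := hN.dotProduct_mulVec_nonneg (WithLp.equiv 2 (Fin k → ℝ) x)
  simpa [Matrix.toEuclideanLin_apply, PiLp.inner_apply, dotProduct, mul_comm] using this

lemma abs_inner_aux {k : ℕ} (D : Matrix (Fin k) (Fin k) ℝ) (x : EuclideanSpace ℝ (Fin k)) :
    |(inner ℝ x (Matrix.toEuclideanLin D x) : ℝ)| ≤ ‖D‖ * ‖x‖ ^ 2 := by
  calc |(inner ℝ x (Matrix.toEuclideanLin D x) : ℝ)| ≤ ‖x‖ * ‖Matrix.toEuclideanLin D x‖ :=
        abs_real_inner_le_norm _ _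
    _ ≤ ‖x‖ * (‖D‖ * ‖x‖) := by
        apply mul_le_mul_of_nonneg_left _ (norm_nonneg x)
        exact (LinearMap.toContinuousLinearMap (Matrix.toEuclideanLin D)).le_opNorm x
    _ = ‖D‖ * ‖x‖ ^ 2 := by ring

lemma inv_norm_aux {k : ℕ} {M : Matrix (Fin k) (Fin k) ℝ} (hM : M.PosDef) {c : ℝ} (hc : 0 < c)
    (h : ∀ x : EuclideanSpace ℝ (Fin k), c * ‖x‖ ^ 2 ≤ inner ℝ x (Matrix.toEuclideanLin M x)) :
    ‖M⁻¹‖ ≤ 1 / c := by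
  rw [Matrix.l2_opNorm_def]
  apply ContinuousLinearMap.opNorm_le_bound _ (by positivity)
  intro y
  set x := Matrix.toEuclideanLin M⁻¹ y with hx
  have hMx : Matrix.toEuclideanLin M x = y := by
    rw [hx]
    simp only [Matrix.toEuclideanLin_apply]
    rw [Matrix.mulVec_mulVec,
      Matrix.mul_nonsing_inv _ ((Matrix.isUnit_iff_isUnit_det M).1 hM.isUnit),
      Matrix.one_mulVec, WithLp.toLp_ofLp]
  have h1 : c * ‖x‖ ^ 2 ≤ ‖x‖ * ‖y‖ := by
    calc c * ‖x‖ ^ 2 ≤ inner ℝ x (Matrix.toEuclideanLin M x) := h x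
      _ = inner ℝ x y := by rw [hMx]
      _ ≤ ‖x‖ * ‖y‖ := real_inner_le_norm _ _
  rcases eq_or_lt_of_le (norm_nonneg x) with h0 | h0
  · rw [LinearEquiv.trans_apply]
    show ‖x‖ ≤ _
    rw [← h0]
    positivity
  · have : c * ‖x‖ ≤ ‖y‖ := by nlinarith
    rw [LinearEquiv.trans_apply]
    show ‖x‖ ≤ _
    rw [div_mul_eq_mul_div, le_div_iff₀ hc]
    nlinarith

lemma lamMin_le_eigenvalues_aux {k : ℕ} {M : Matrix (Fin k) (Fin k) ℝ} (hH : M.IsHermitian)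
    (i : Fin k) : lamMin M ≤ hH.eigenvalues i :=
  csInf_le (Matrix.finite_real_spectrum (A := M)).bddBelow (hH.eigenvalues_mem_spectrum_real i)

lemma lamMin_pos_aux {k : ℕ} (hk : 0 < k) {M : Matrix (Fin k) (Fin k) ℝ} (hM : M.PosDef) :
    0 < lamMin M := by
  have hspec : spectrum ℝ M = Set.range hM.1.eigenvalues :=
    Matrix.IsHermitian.spectrum_real_eq_range_eigenvalues hM.1
  have hne : (spectrum ℝ M).Nonempty := by
    rw [hspec]
    exact ⟨_, ⟨⟨0, hk⟩, rfl⟩⟩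
  have hmem : sInf (spectrum ℝ M) ∈ spectrum ℝ M :=
    Set.Nonempty.csInf_mem hne (Matrix.finite_real_spectrum (A := M))
  rw [hspec] at hmem
  obtain ⟨i, hi⟩ := hmem
  have heq : lamMin M = hM.1.eigenvalues i := by rw [lamMin, hspec, ← hi]
  rw [heq]
  exact hM.eigenvalues_pos i

/-- Theorem (bound on the change of the optimal gain): if `‖E† − E*‖ ≤ ε`,
`‖P† − P*‖ ≤ f(ε)` for some `f : ℝ₊ → ℝ₊`, `‖E*⁻¹‖ < 1`, and `ε ≤ λ_min(E*)/2`, then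
`‖K† − K*‖ ≤ Γ₃·f(ε) + Γ₄·ε`, where
`Γ₃ = (2γ/λ_min(E*))·max{‖A‖,‖B‖}²·(‖K*‖+1)` and `Γ₄ = (2/λ_min(E*))·‖K*‖`. -/
theorem optimal_gain_change_bound {n m : ℕ}
    (A : Matrix (Fin n) (Fin n) ℝ) (B : Matrix (Fin n) (Fin m) ℝ)
    (γ : ℝ) (hγ0 : 0 < γ) (hγ1 : γ ≤ 1)
    (Estar Edag : Matrix (Fin m) (Fin m) ℝ) (hEstar : Estar.PosDef) (hEdag : Edag.PosDef)
    (hEinv : specNorm Estar⁻¹ < 1)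
    (Pstar Pdag : Matrix (Fin n) (Fin n) ℝ) (hPstar : Pstar.PosSemidef)
    (hPdag : Pdag.PosSemidef)
    (Kstar Kdag : Matrix (Fin m) (Fin n) ℝ)
    (hKstar : Kstar = -(γ • ((Estar + γ • (Bᵀ * Pstar * B))⁻¹ * (Bᵀ * Pstar * A))))
    (hKdag : Kdag = -(γ • ((Edag + γ • (Bᵀ * Pdag * B))⁻¹ * (Bᵀ * Pdag * A))))
    (f : ℝ → ℝ) (hf : ∀ x, 0 ≤ x → 0 ≤ f x)
    (ε : ℝ) (hε0 : 0 ≤ ε)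
    (hE : specNorm (Edag - Estar) ≤ ε) (hP : specNorm (Pdag - Pstar) ≤ f ε)
    (hε : ε ≤ lamMin Estar / 2) :
    specNorm (Kdag - Kstar) ≤
      2 * γ / lamMin Estar * max (specNorm A) (specNorm B) ^ 2 * (specNorm Kstar + 1) * f ε +
        2 / lamMin Estar * specNorm Kstar * ε := by
  simp only [specNorm_eq_norm] at hE hP ⊢
  rcases Nat.eq_zero_or_pos m with hm | hm
  · subst hm
    have hK0 : Kdag - Kstar = 0 := Subsingleton.elim _ _
    have hlam : lamMin Estar = 0 := by
      have : spectrum ℝ Estar = ∅ := by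
        ext x
        simp only [Set.mem_empty_iff_false, iff_false, spectrum.mem_iff, not_not]
        exact isUnit_of_subsingleton _
      rw [lamMin, this, Real.sInf_empty]
    rw [hK0, hlam, norm_zero]
    simp
  -- main case
  set L := lamMin Estar with hLdef
  have hL : 0 < L := lamMin_pos_aux hm hEstar
  have hLev : ∀ i, L ≤ hEstar.1.eigenvalues i := fun i => lamMin_le_eigenvalues_aux hEstar.1 i
  set Mdag := Edag + γ • (Bᵀ * Pdag * B) with hMdagdef
  set Mstar := Estar + γ • (Bᵀ * Pstar * B) with hMstardef
  have hBPBdag : (Bᵀ * Pdag * B).PosSemidef := by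
    have := hPdag.conjTranspose_mul_mul_same B
    rwa [conjTranspose_eq_transpose_of_trivial] at this
  have hBPBstar : (Bᵀ * Pstar * B).PosSemidef := by
    have := hPstar.conjTranspose_mul_mul_same B
    rwa [conjTranspose_eq_transpose_of_trivial] at this
  have hMdagPD : Mdag.PosDef := hEdag.add_posSemidef (posSemidef_smul_aux hBPBdag hγ0.le)
  have hMstarPD : Mstar.PosDef := hEstar.add_posSemidef (posSemidef_smul_aux hBPBstar hγ0.le)
  have hdetd : IsUnit Mdag.det := (Matrix.isUnit_iff_isUnit_det _).1 hMdagPD.isUnit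
  have hdets : IsUnit Mstar.det := (Matrix.isUnit_iff_isUnit_det _).1 hMstarPD.isUnit
  -- coercivity
  have hcoer : ∀ x : EuclideanSpace ℝ (Fin m),
      (L / 2) * ‖x‖ ^ 2 ≤ inner ℝ x (Matrix.toEuclideanLin Mdag x) := by
    intro x
    have hsplit : Mdag = Estar + ((Edag - Estar) + γ • (Bᵀ * Pdag * B)) := by
      rw [hMdagdef]; abel
    have hinner : (inner ℝ x (Matrix.toEuclideanLin Mdag x) : ℝ) =
        inner ℝ x (Matrix.toEuclideanLin Estar x) +
          (inner ℝ x (Matrix.toEuclideanLin (Edag - Estar) x) +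
            inner ℝ x (Matrix.toEuclideanLin (γ • (Bᵀ * Pdag * B)) x)) := by
      rw [hsplit]
      simp only [map_add, LinearMap.add_apply, inner_add_right]
    have h1 : L * ‖x‖ ^ 2 ≤ inner ℝ x (Matrix.toEuclideanLin Estar x) :=
      rayleigh_aux hEstar.1 hLev x
    have h2 : -(ε * ‖x‖ ^ 2) ≤ (inner ℝ x (Matrix.toEuclideanLin (Edag - Estar) x) : ℝ) := by
      have habs := abs_inner_aux (Edag - Estar) x
      have : ‖Edag - Estar‖ * ‖x‖ ^ 2 ≤ ε * ‖x‖ ^ 2 :=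
        mul_le_mul_of_nonneg_right hE (sq_nonneg _)
      have := (abs_le.1 habs).1
      nlinarith
    have h3 : 0 ≤ (inner ℝ x (Matrix.toEuclideanLin (γ • (Bᵀ * Pdag * B)) x) : ℝ) :=
      psd_inner_aux (posSemidef_smul_aux hBPBdag hγ0.le) x
    rw [hinner]
    nlinarith [sq_nonneg ‖x‖]
  have hMinv : ‖Mdag⁻¹‖ ≤ 2 / L := by
    have := inv_norm_aux hMdagPD (by positivity : (0:ℝ) < L / 2) hcoer
    rwa [one_div_div] at this
  -- the algebraic identity
  have hMdK : Mdag * Kdag = -(γ • (Bᵀ * Pdag * A)) := by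
    rw [hKdag, Matrix.mul_neg, Matrix.mul_smul, ← Matrix.mul_assoc,
      Matrix.mul_nonsing_inv _ hdetd, Matrix.one_mul]
  have hMsK : Mstar * Kstar = -(γ • (Bᵀ * Pstar * A)) := by
    rw [hKstar, Matrix.mul_neg, Matrix.mul_smul, ← Matrix.mul_assoc,
      Matrix.mul_nonsing_inv _ hdets, Matrix.one_mul]
  set R := γ • (Bᵀ * (Pdag - Pstar) * A) +
      ((Edag - Estar) * Kstar + γ • ((Bᵀ * (Pdag - Pstar) * B) * Kstar)) with hRdef
  have hident : Mdag * (Kdag - Kstar) = -R := by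
    have hMsplit : Mdag = Mstar + ((Edag - Estar) + γ • (Bᵀ * (Pdag - Pstar) * B)) := by
      rw [hMdagdef, hMstardef]
      simp only [Matrix.mul_sub, Matrix.sub_mul, smul_sub]
      abel
    have expand : Mdag * Kstar = Mstar * Kstar +
        ((Edag - Estar) * Kstar + γ • ((Bᵀ * (Pdag - Pstar) * B) * Kstar)) := by
      rw [hMsplit]
      simp only [Matrix.add_mul, Matrix.smul_mul]
    rw [Matrix.mul_sub, hMdK, expand, hMsK, hRdef]
    simp only [Matrix.mul_sub, Matrix.sub_mul, smul_sub]
    abel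
  have hKform : Kdag - Kstar = -(Mdag⁻¹ * R) := by
    have h2 : Kdag - Kstar = Mdag⁻¹ * (Mdag * (Kdag - Kstar)) := by
      rw [← Matrix.mul_assoc, Matrix.nonsing_inv_mul _ hdetd, Matrix.one_mul]
    rw [h2, hident, Matrix.mul_neg]
  -- norm bounds
  have hfε : 0 ≤ f ε := hf ε hε0
  have hBt : ‖Bᵀ‖ = ‖B‖ := norm_transpose_aux B
  have n1 : ‖Bᵀ * (Pdag - Pstar) * A‖ ≤ ‖B‖ * (f ε * ‖A‖) := by
    calc ‖Bᵀ * (Pdag - Pstar) * A‖ ≤ ‖Bᵀ * (Pdag - Pstar)‖ * ‖A‖ := Matrix.l2_opNorm_mul _ _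
      _ ≤ (‖Bᵀ‖ * ‖Pdag - Pstar‖) * ‖A‖ :=
          mul_le_mul_of_nonneg_right (Matrix.l2_opNorm_mul _ _) (norm_nonneg _)
      _ = ‖B‖ * (‖Pdag - Pstar‖ * ‖A‖) := by rw [hBt]; ring
      _ ≤ ‖B‖ * (f ε * ‖A‖) := by gcongr
  have n2 : ‖(Edag - Estar) * Kstar‖ ≤ ε * ‖Kstar‖ :=
    (Matrix.l2_opNorm_mul _ _).trans (mul_le_mul_of_nonneg_right hE (norm_nonneg _))
  have n3 : ‖(Bᵀ * (Pdag - Pstar) * B) * Kstar‖ ≤ ‖B‖ * (f ε * (‖B‖ * ‖Kstar‖)) := by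
    calc ‖(Bᵀ * (Pdag - Pstar) * B) * Kstar‖ ≤ ‖Bᵀ * (Pdag - Pstar) * B‖ * ‖Kstar‖ :=
          Matrix.l2_opNorm_mul _ _
      _ ≤ (‖Bᵀ * (Pdag - Pstar)‖ * ‖B‖) * ‖Kstar‖ :=
          mul_le_mul_of_nonneg_right (Matrix.l2_opNorm_mul _ _) (norm_nonneg _)
      _ ≤ ((‖Bᵀ‖ * ‖Pdag - Pstar‖) * ‖B‖) * ‖Kstar‖ := by
          gcongr
          exact Matrix.l2_opNorm_mul _ _
      _ = ‖B‖ * (‖Pdag - Pstar‖ * (‖B‖ * ‖Kstar‖)) := by rw [hBt]; ring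
      _ ≤ ‖B‖ * (f ε * (‖B‖ * ‖Kstar‖)) := by gcongr
  have hRnorm : ‖R‖ ≤ γ * (‖B‖ * (f ε * ‖A‖)) +
      (ε * ‖Kstar‖ + γ * (‖B‖ * (f ε * (‖B‖ * ‖Kstar‖)))) := by
    rw [hRdef]
    calc ‖γ • (Bᵀ * (Pdag - Pstar) * A) +
          ((Edag - Estar) * Kstar + γ • ((Bᵀ * (Pdag - Pstar) * B) * Kstar))‖
        ≤ ‖γ • (Bᵀ * (Pdag - Pstar) * A)‖ +
          (‖(Edag - Estar) * Kstar‖ + ‖γ • ((Bᵀ * (Pdag - Pstar) * B) * Kstar)‖) :=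
          (norm_add_le _ _).trans (by gcongr; exact norm_add_le _ _)
      _ ≤ γ * (‖B‖ * (f ε * ‖A‖)) + (ε * ‖Kstar‖ + γ * (‖B‖ * (f ε * (‖B‖ * ‖Kstar‖)))) := by
          rw [norm_smul, norm_smul, Real.norm_eq_abs, abs_of_pos hγ0]
          gcongr
  have hmain : ‖Kdag - Kstar‖ ≤ (2 / L) * (γ * (‖B‖ * (f ε * ‖A‖)) +
      (ε * ‖Kstar‖ + γ * (‖B‖ * (f ε * (‖B‖ * ‖Kstar‖))))) := by
    rw [hKform, norm_neg]
    calc ‖Mdag⁻¹ * R‖ ≤ ‖Mdag⁻¹‖ * ‖R‖ := Matrix.l2_opNorm_mul _ _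
      _ ≤ (2 / L) * (γ * (‖B‖ * (f ε * ‖A‖)) +
          (ε * ‖Kstar‖ + γ * (‖B‖ * (f ε * (‖B‖ * ‖Kstar‖))))) := by
          apply mul_le_mul hMinv hRnorm (norm_nonneg _) (by positivity)
  -- final arithmetic
  set a := ‖A‖; set b := ‖B‖; set kk := ‖Kstar‖; set mx := max a b
  have ha : a ≤ mx := le_max_left _ _
  have hb : b ≤ mx := le_max_right _ _
  have ha0 : 0 ≤ a := norm_nonneg _
  have hb0 : 0 ≤ b := norm_nonneg _
  have hkk0 : 0 ≤ kk := norm_nonneg _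
  have hmx0 : 0 ≤ mx := le_trans ha0 ha
  have hba : b * a ≤ mx ^ 2 := by rw [sq]; exact mul_le_mul hb ha ha0 hmx0
  have hbb : b * b ≤ mx ^ 2 := by rw [sq]; exact mul_le_mul hb hb hb0 hmx0
  have hS : γ * (b * (f ε * a)) + (ε * kk + γ * (b * (f ε * (b * kk)))) ≤
      γ * mx ^ 2 * (kk + 1) * f ε + kk * ε := by
    have h1 : γ * f ε * (b * a) ≤ γ * f ε * mx ^ 2 :=
      mul_le_mul_of_nonneg_left hba (by positivity)
    have h2 : γ * f ε * kk * (b * b) ≤ γ * f ε * kk * mx ^ 2 :=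
      mul_le_mul_of_nonneg_left hbb (by positivity)
    linarith only [h1, h2]
  calc ‖Kdag - Kstar‖ ≤ (2 / L) * (γ * (b * (f ε * a)) +
        (ε * kk + γ * (b * (f ε * (b * kk))))) := hmain
    _ ≤ (2 / L) * (γ * mx ^ 2 * (kk + 1) * f ε + kk * ε) :=
        mul_le_mul_of_nonneg_left hS (by positivity)
    _ = 2 * γ / L * mx ^ 2 * (kk + 1) * f ε + 2 / L * kk * ε := by
        field_simp
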